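/- Let (A, B, i, j) be stable framed representation data on spaces (D_v) with framing (F_v) satisfying the moment map equations at every vertex. Then for every vertex v, the dimension of the subspace ⋂_{e : s(e)=v} ker(A_e) ∩ ⋂_{e : t(e)=v} ker(B_e) ∩ ker(j_v) of D_v is at least 2·dim D_v − ∑_{e : s(e)=v} dim D_{t(e)} − ∑_{e : t(e)=v} dim D_{s(e)} − dim F_v (where a loop at v contributes dim D_v to each of the two sums). -/

import Mathlib

open Module LinearMap

/-- Transport along an equality of vertices. -/
def dcast {V : Type*} (D : V → Type*) [∀ v, AddCommGroup (D v)] [∀ v, Module ℂ (D v)]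
    {v w : V} (h : v = w) : D v →ₗ[ℂ] D w := by subst h; exact LinearMap.id

/-- Stability of framed representation data `(A, B, i)` of a quiver with source/target
maps `s t : E → V`, on spaces `D` with framing spaces `F`: the only subrepresentation
containing the image of the framing maps is everything. -/
def Stable {V E : Type*} (s t : E → V)
    (D : V → Type*) [∀ v, AddCommGroup (D v)] [∀ v, Module ℂ (D v)]
    (F : V → Type*) [∀ v, AddCommGroup (F v)] [∀ v, Module ℂ (F v)]
    (A : ∀ e, D (s e) →ₗ[ℂ] D (t e))
    (B : ∀ e, D (t e) →ₗ[ℂ] D (s e))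
    (i : ∀ v, F v →ₗ[ℂ] D v) : Prop :=
  ∀ S : ∀ v, Submodule ℂ (D v),
    (∀ e, ∀ x ∈ S (s e), A e x ∈ S (t e)) →
    (∀ e, ∀ x ∈ S (t e), B e x ∈ S (s e)) →
    (∀ v, ∀ f, i v f ∈ S v) →
    ∀ v, S v = ⊤

/-- The moment map of framed representation data at a vertex `v`:
`∑_{e : t e = v} A_e ∘ B_e − ∑_{e : s e = v} B_e ∘ A_e + i_v ∘ j_v` as an
endomorphism of `D v`. -/
def momentMap {V E : Type*} [Fintype E] [DecidableEq V] (s t : E → V)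
    (D : V → Type*) [∀ v, AddCommGroup (D v)] [∀ v, Module ℂ (D v)]
    (F : V → Type*) [∀ v, AddCommGroup (F v)] [∀ v, Module ℂ (F v)]
    (A : ∀ e, D (s e) →ₗ[ℂ] D (t e))
    (B : ∀ e, D (t e) →ₗ[ℂ] D (s e))
    (i : ∀ v, F v →ₗ[ℂ] D v)
    (j : ∀ v, D v →ₗ[ℂ] F v) (v : V) : D v →ₗ[ℂ] D v :=
  (∑ e : E, if h : t e = v then dcast D h ∘ₗ A e ∘ₗ B e ∘ₗ dcast D h.symm else 0)
  - (∑ e : E, if h : s e = v then dcast D h ∘ₗ B e ∘ₗ A e ∘ₗ dcast D h.symm else 0)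
  + i v ∘ₗ j v

theorem sum_dite_subtype {E : Type*} [Fintype E] {p : E → Prop} [DecidablePred p]
    {M : Type*} [AddCommMonoid M] (f : ∀ e, p e → M) :
    ∑ e : E, (if h : p e then f e h else 0) = ∑ e : {e // p e}, f e.1 e.2 := by
  rw [← Finset.sum_filter_of_ne (p := p) (fun x _ h => by by_contra hp; exact h (dif_neg hp)),
    Finset.sum_subtype (p := p) (Finset.univ.filter p) (by simp)]
  exact Finset.sum_congr rfl fun e _ => dif_pos e.2

section aux

variable {V E : Type*} [Fintype E] [DecidableEq V] [DecidableEq E] (s t : E → V)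
  (D : V → Type*) [∀ v, AddCommGroup (D v)] [∀ v, Module ℂ (D v)]
  (F : V → Type*) [∀ v, AddCommGroup (F v)] [∀ v, Module ℂ (F v)]
  (A : ∀ e, D (s e) →ₗ[ℂ] D (t e))
  (B : ∀ e, D (t e) →ₗ[ℂ] D (s e))
  (i : ∀ v, F v →ₗ[ℂ] D v)
  (j : ∀ v, D v →ₗ[ℂ] F v)

/-- The map whose kernel is the intersection in question. -/
def sigmaMap (v : V) : D v →ₗ[ℂ]
    ((∀ e : {e // s e = v}, D (t e.1)) × (∀ e : {e // t e = v}, D (s e.1)) × F v) :=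
  (LinearMap.pi fun e : {e // s e = v} => A e.1 ∘ₗ dcast D e.2.symm).prod
    ((LinearMap.pi fun e : {e // t e = v} => B e.1 ∘ₗ dcast D e.2.symm).prod (j v))

/-- The "dual" map, surjective by stability, through whose kernel `sigmaMap` factors. -/
def tauMap (w : V) :
    ((∀ e : {e // s e = w}, D (t e.1)) × (∀ e : {e // t e = w}, D (s e.1)) × F w) →ₗ[ℂ] D w :=
  (LinearMap.lsum ℂ (fun e : {e // s e = w} => D (t e.1)) ℂ
      (fun e => dcast D e.2 ∘ₗ B e.1)).coprod
    ((-(LinearMap.lsum ℂ (fun e : {e // t e = w} => D (s e.1)) ℂ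
      (fun e => dcast D e.2 ∘ₗ A e.1))).coprod (-(i w)))

theorem tauMap_surjective (hstable : Stable s t D F A B i) (w : V) :
    LinearMap.range (tauMap s t D F A B i w) = ⊤ := by
  refine hstable (fun w => LinearMap.range (tauMap s t D F A B i w)) ?_ ?_ ?_ w
  · intro e x _
    have : -(A e x) ∈ LinearMap.range (tauMap s t D F A B i (t e)) := by
      refine ⟨(0, Pi.single (⟨e, rfl⟩ : {e' // t e' = t e}) x, 0), ?_⟩
      simp only [tauMap, LinearMap.coprod_apply, map_zero, LinearMap.lsum_apply,
        LinearMap.sum_apply, LinearMap.comp_apply, LinearMap.proj_apply, LinearMap.neg_apply,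
        zero_add, add_zero, neg_eq_iff_eq_neg, neg_neg]
      rw [Finset.sum_eq_single (⟨e, rfl⟩ : {e' // t e' = t e})]
      · rw [Pi.single_eq_same]; rfl
      · intro b _ hb; rw [Pi.single_eq_of_ne hb]; simp
      · simp
    simpa using neg_mem this
  · intro e x _
    have : B e x ∈ LinearMap.range (tauMap s t D F A B i (s e)) := by
      refine ⟨(Pi.single (⟨e, rfl⟩ : {e' // s e' = s e}) x, 0, 0), ?_⟩
      simp only [tauMap, LinearMap.coprod_apply, map_zero, LinearMap.lsum_apply,
        LinearMap.sum_apply, LinearMap.comp_apply, LinearMap.proj_apply,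
        zero_add, add_zero]
      rw [Finset.sum_eq_single (⟨e, rfl⟩ : {e' // s e' = s e})]
      · rw [Pi.single_eq_same]; rfl
      · intro b _ hb; rw [Pi.single_eq_of_ne hb]; simp
      · simp
    exact this
  · intro w f
    exact ⟨(0, 0, -f), by simp [tauMap]⟩

theorem range_sigma_le_ker_tau
    (hm : momentMap s t D F A B i j = 0) (v : V) :
    LinearMap.range (sigmaMap s t D F A B j v) ≤ LinearMap.ker (tauMap s t D F A B i v) := by
  rintro _ ⟨x, rfl⟩
  have hmx : momentMap s t D F A B i j v x = 0 := by rw [hm]; rfl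
  simp only [momentMap, LinearMap.add_apply, LinearMap.sub_apply, LinearMap.sum_apply,
    LinearMap.comp_apply] at hmx
  simp only [apply_dite (fun g : D v →ₗ[ℂ] D v => g x), LinearMap.zero_apply] at hmx
  rw [sum_dite_subtype, sum_dite_subtype] at hmx
  rw [LinearMap.mem_ker]
  simp only [tauMap, sigmaMap, LinearMap.coprod_apply, LinearMap.lsum_apply,
    LinearMap.sum_apply, LinearMap.comp_apply, LinearMap.prod_apply, Function.prod,
    LinearMap.pi_apply, LinearMap.neg_apply, LinearMap.proj_apply, map_neg]
  simp only [LinearMap.comp_apply] at hmx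
  have h2 := congrArg Neg.neg hmx
  rw [neg_zero] at h2
  rw [← h2]
  abel

theorem ker_sigma (v : V) : LinearMap.ker (sigmaMap s t D F A B j v) =
    (⨅ e : {e : E // s e = v}, LinearMap.ker (A e.1 ∘ₗ dcast D e.2.symm)) ⊓
      (⨅ e : {e : E // t e = v}, LinearMap.ker (B e.1 ∘ₗ dcast D e.2.symm)) ⊓
      LinearMap.ker (j v) := by
  simp [sigmaMap, LinearMap.ker_prod, LinearMap.ker_pi, inf_assoc]

end aux

/-- Lower bound on the dimension of `Hom(ℂ_v, D)` for a stable representation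
satisfying the moment map equations. -/
theorem dim_hom_lower_bound
    {V E : Type*} [Fintype V] [Fintype E] [DecidableEq V] (s t : E → V)
    (D F : V → Type*)
    [∀ v, AddCommGroup (D v)] [∀ v, Module ℂ (D v)] [∀ v, FiniteDimensional ℂ (D v)]
    [∀ v, AddCommGroup (F v)] [∀ v, Module ℂ (F v)] [∀ v, FiniteDimensional ℂ (F v)]
    (A : ∀ e, D (s e) →ₗ[ℂ] D (t e)) (B : ∀ e, D (t e) →ₗ[ℂ] D (s e))
    (i : ∀ v, F v →ₗ[ℂ] D v) (j : ∀ v, D v →ₗ[ℂ] F v)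
    (hstable : Stable s t D F A B i)
    (hmoment : ∀ v, momentMap s t D F A B i j v = 0) :
    ∀ v, 2 * (finrank ℂ (D v) : ℤ)
        - ∑ e ∈ Finset.univ.filter (fun e => s e = v), (finrank ℂ (D (t e)) : ℤ)
        - ∑ e ∈ Finset.univ.filter (fun e => t e = v), (finrank ℂ (D (s e)) : ℤ)
        - (finrank ℂ (F v) : ℤ)
      ≤ (finrank ℂ
          ↥((⨅ e : {e : E // s e = v}, LinearMap.ker (A e.1 ∘ₗ dcast D e.2.symm)) ⊓
            (⨅ e : {e : E // t e = v}, LinearMap.ker (B e.1 ∘ₗ dcast D e.2.symm)) ⊓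
            LinearMap.ker (j v)) : ℤ) := by
  classical
  intro v
  set σ := sigmaMap s t D F A B j v with hσ
  set τ := tauMap s t D F A B i v with hτ
  have h1 : finrank ℂ (LinearMap.range σ) + finrank ℂ (LinearMap.ker σ) = finrank ℂ (D v) :=
    σ.finrank_range_add_finrank_ker
  have hsub : LinearMap.range σ ≤ LinearMap.ker τ :=
    range_sigma_le_ker_tau s t D F A B i j (funext hmoment) v
  have h2 : finrank ℂ (LinearMap.range σ) ≤ finrank ℂ (LinearMap.ker τ) :=
    Submodule.finrank_mono hsub
  have h3 : finrank ℂ (LinearMap.range τ) + finrank ℂ (LinearMap.ker τ) =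
      finrank ℂ ((∀ e : {e // s e = v}, D (t e.1)) × (∀ e : {e // t e = v}, D (s e.1)) × F v) :=
    τ.finrank_range_add_finrank_ker
  have h4 : finrank ℂ (LinearMap.range τ) = finrank ℂ (D v) := by
    rw [hτ, tauMap_surjective s t D F A B i hstable v, finrank_top]
  have hW : finrank ℂ ((∀ e : {e // s e = v}, D (t e.1)) ×
        (∀ e : {e // t e = v}, D (s e.1)) × F v)
      = (∑ e ∈ Finset.univ.filter (fun e => s e = v), finrank ℂ (D (t e)))
        + (∑ e ∈ Finset.univ.filter (fun e => t e = v), finrank ℂ (D (s e)))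
        + finrank ℂ (F v) := by
    rw [Module.finrank_prod, Module.finrank_prod, Module.finrank_pi_fintype,
      Module.finrank_pi_fintype,
      Finset.sum_subtype (p := fun e => s e = v) (Finset.univ.filter fun e => s e = v)
        (by simp) (fun e => finrank ℂ (D (t e))),
      Finset.sum_subtype (p := fun e => t e = v) (Finset.univ.filter fun e => t e = v)
        (by simp) (fun e => finrank ℂ (D (s e)))]
    ring
  rw [← ker_sigma s t D F A B j v, ← hσ]
  rw [← Nat.cast_sum, ← Nat.cast_sum]
  omega
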